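/- Let f : ℝ → A be a function into a real vector space A, and for x ≠ 0 define δ₁f(x) = (f(x) - f(-x))/x and δ₂f(x) = (f(x) - f(-x))/x² - (2/x) f'(x). Then for any twice differentiable f and x ≠ 0, one has δ₂(δ₁ f)(x) + (δ₂ f)'(x) - δ₂(f')(x) = 0, i.e. δ₂ ∘ δ₁ + [d/dx, δ₂] = 0. -/

import Mathlib

/-- δ₁ f (x) = (f x - f (-x)) / x -/
noncomputable def delta1 {A : Type*} [NormedAddCommGroup A] [NormedSpace ℝ A]
    (f : ℝ → A) (x : ℝ) : A := x⁻¹ • (f x - f (-x))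

/-- δ₂ f (x) = (f x - f (-x)) / x² - (2/x) f'(x) -/
noncomputable def delta2 {A : Type*} [NormedAddCommGroup A] [NormedSpace ℝ A]
    (f : ℝ → A) (x : ℝ) : A := (x ^ 2)⁻¹ • (f x - f (-x)) - (2 / x) • deriv f x

/-- The operator identity δ₂ ∘ δ₁ + [d/dx, δ₂] = 0, pointwise for x ≠ 0 and C² functions. -/
theorem stmt0 {A : Type*} [NormedAddCommGroup A] [NormedSpace ℝ A]
    (f : ℝ → A) (hf : ContDiff ℝ 2 f) (x : ℝ) (hx : x ≠ 0) :
    delta2 (delta1 f) x + deriv (delta2 f) x - delta2 (deriv f) x = 0 := by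
  have hf1 : Differentiable ℝ f := hf.differentiable (by norm_num)
  have hf2 : ContDiff ℝ 1 (deriv f) :=
    (contDiff_succ_iff_deriv.mp (show ContDiff ℝ (1 + 1) f by exact_mod_cast hf)).2.2
  have hf2d : Differentiable ℝ (deriv f) := hf2.differentiable one_ne_zero
  -- basic derivative facts
  have hFa : ∀ y : ℝ, HasDerivAt f (deriv f y) y := fun y => (hf1 y).hasDerivAt
  have hFb : ∀ y : ℝ, HasDerivAt (fun z => f (-z)) ((-1 : ℝ) • deriv f (-y)) y :=
    fun y => (hFa (-y)).scomp y (hasDerivAt_neg y)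
  have hF : ∀ y : ℝ, HasDerivAt (fun z => f z - f (-z))
      (deriv f y - (-1 : ℝ) • deriv f (-y)) y := fun y => (hFa y).sub (hFb y)
  -- derivative of delta1 f at x
  have hD1 : HasDerivAt (delta1 f)
      (x⁻¹ • (deriv f x - (-1 : ℝ) • deriv f (-x)) + (-(x ^ 2)⁻¹) • (f x - f (-x))) x := by
    have : HasDerivAt (delta1 f) _ x := (hasDerivAt_inv hx).smul (hF x)
    simpa [delta1] using this
  -- derivative of delta2 f at x
  have hD2 : HasDerivAt (delta2 f)
      (((x ^ 2)⁻¹ • (deriv f x - (-1 : ℝ) • deriv f (-x))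
          + (-(2 * x ^ 1) / (x ^ 2) ^ 2) • (f x - f (-x)))
        - ((2 / x) • deriv (deriv f) x + ((0 * x - 2 * 1) / x ^ 2) • deriv f x)) x := by
    have h1 : HasDerivAt (fun y : ℝ => (y ^ 2)⁻¹) (-(2 * x ^ 1) / (x ^ 2) ^ 2) x :=
      (hasDerivAt_pow 2 x).inv (pow_ne_zero 2 hx)
    have h2 : HasDerivAt (fun y : ℝ => 2 / y) ((0 * x - 2 * 1) / x ^ 2) x :=
      (hasDerivAt_const x (2 : ℝ)).div (hasDerivAt_id x) hx
    have h3 : HasDerivAt (deriv f) (deriv (deriv f) x) x := (hf2d x).hasDerivAt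
    have hA := h1.smul (hF x)
    have hB := h2.smul h3
    exact hA.sub hB
  rw [hD2.deriv]
  -- δ₁ f is even
  have heven : delta1 f (-x) = delta1 f x := by
    simp only [delta1, neg_neg]
    rw [show f (-x) - f x = -(f x - f (-x)) by abel, inv_neg, neg_smul, smul_neg, neg_neg]
  simp only [delta2, heven, hD1.deriv, sub_self, smul_zero, zero_sub]
  match_scalars <;> field_simp <;> ring
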